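/- Pointwise convergence of AdaPBB: the sequence {x^k} generated by the AdaPBB iteration converges to a minimizer of F = f + g. -/

import Mathlib

open scoped RealInnerProductSpace
open Finset Filter

noncomputable section

/-- The AdaPBB iteration (Algorithm 3 of the paper) in its implicit form, for a composite
objective `F = f + g` where `f : ℝⁿ → ℝ` is convex and differentiable with gradient `f'`,
and `g : ℝⁿ → ℝ` is convex.  `ξ k` is a subgradient of `g` at `x k`. -/
structure AdaPBB (n : ℕ) where
  f : EuclideanSpace ℝ (Fin n) → ℝ
  g : EuclideanSpace ℝ (Fin n) → ℝ
  f' : EuclideanSpace ℝ (Fin n) → EuclideanSpace ℝ (Fin n)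
  x : ℕ → EuclideanSpace ℝ (Fin n)
  ξ : ℕ → EuclideanSpace ℝ (Fin n)
  α : ℕ → ℝ
  θ : ℕ → ℝ
  lam : ℕ → ℝ
  hfconv : ConvexOn ℝ Set.univ f
  hgconv : ConvexOn ℝ Set.univ g
  hgrad : ∀ y, HasGradientAt f (f' y) y
  hmin : ∃ z, ∀ y, f z + g z ≤ f y + g y
  hα0 : 0 < α 0
  hθ0 : 0 ≤ θ 0
  hsub : ∀ k, ∀ y, g (x k) + ⟪ξ k, y - x k⟫ ≤ g y
  hstep : ∀ k, x (k + 1) = x k - α k • (f' (x k) + ξ (k + 1))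
  hne : ∀ k, f' (x (k + 1)) ≠ f' (x k)
  hlam : ∀ k, lam (k + 1) =
    ⟪f' (x (k + 1)) - f' (x k), x (k + 1) - x k⟫ / ‖f' (x (k + 1)) - f' (x k)‖ ^ 2
  hlampos : ∀ k, 0 < lam (k + 1)
  hcase1 : ∀ k, α k ≤ lam (k + 1) →
    α (k + 1) = Real.sqrt (1 + θ k) * α k ∧ θ (k + 1) = α (k + 1) / α k
  hcase2 : ∀ k, α k / 2 < lam (k + 1) → lam (k + 1) < α k →
    α (k + 1) = α k / Real.sqrt 2 ∧ θ (k + 1) = 0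
  hcase3 : ∀ k, lam (k + 1) ≤ α k / 2 →
    α (k + 1) = lam (k + 1) / Real.sqrt 2 ∧ θ (k + 1) = 0

namespace AdaPBB

variable {n : ℕ}

/-- The composite objective `F = f + g`. -/
def F (S : AdaPBB n) (y : EuclideanSpace ℝ (Fin n)) : ℝ := S.f y + S.g y

/-- `B_k` (for `k ≥ 1`), as in (5.13). -/
def B (S : AdaPBB n) (k : ℕ) : ℝ :=
  if S.α (k - 1) ≤ S.lam k then 0
  else if S.α (k - 1) / 2 < S.lam k then 1
  else (S.α (k - 1) - S.lam k) ^ 2 / S.lam k ^ 2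

/-- `E_k` for `k ≥ 1`, as in (5.13). -/
def Eaux (S : AdaPBB n) (k : ℕ) : ℝ :=
  if S.α (k - 1) ≤ S.lam k then 1 / S.α (k - 1) else 0

/-- `E_k`, with the convention `E_0 = (E_1·α_1² - α_0)/α_0²`. -/
def E (S : AdaPBB n) (k : ℕ) : ℝ :=
  if k = 0 then (S.Eaux 1 * S.α 1 ^ 2 - S.α 0) / S.α 0 ^ 2 else S.Eaux k

/-- The energy `V_k` (for `k ≥ 1`), relative to a minimizer `xs` of `F`. -/
def V (S : AdaPBB n) (xs : EuclideanSpace ℝ (Fin n)) (k : ℕ) : ℝ :=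
  ‖S.x k - xs‖ ^ 2 + 2 * S.B k * S.α k ^ 2 * ‖S.f' (S.x (k - 1)) + S.ξ (k - 1)‖ ^ 2 +
    2 * S.α (k - 1) * (1 + S.E (k - 1) * S.α (k - 1)) * (S.F (S.x (k - 1)) - S.F xs)

/-- The energy `U_k` (for `k ≥ 1`), relative to a minimizer `xs` of `F`. -/
def U (S : AdaPBB n) (xs : EuclideanSpace ℝ (Fin n)) (k : ℕ) : ℝ :=
  ‖S.x k - xs‖ ^ 2 + 2 * S.B k * S.α k ^ 2 * ‖S.f' (S.x (k - 1)) + S.ξ (k - 1)‖ ^ 2 +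
    2 * S.E k * S.α k ^ 2 * (S.F (S.x (k - 1)) - S.F xs)

end AdaPBB

end

open Filter
open scoped RealInnerProductSpace

section XX
variable {n : ℕ}

lemma grad_ineq_test {n : ℕ} {f : EuclideanSpace ℝ (Fin n) → ℝ}
    {G x : EuclideanSpace ℝ (Fin n)}
    (hf : ConvexOn ℝ Set.univ f) (hx : HasGradientAt f G x)
    (y : EuclideanSpace ℝ (Fin n)) :
    f x + ⟪G, y - x⟫ ≤ f y := by
  have hc : HasDerivAt (fun t : ℝ => x + t • (y - x)) (y - x) 0 := by
    simpa using ((hasDerivAt_id (0:ℝ)).smul_const (y - x)).const_add x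
  have hφ : HasDerivAt (fun t : ℝ => f (x + t • (y - x))) ⟪G, y - x⟫ 0 := by
    have hx' : HasFDerivAt f ((InnerProductSpace.toDual ℝ (EuclideanSpace ℝ (Fin n))) G) (x + (0:ℝ) • (y - x)) := by
      simpa using hx.hasFDerivAt
    have := hx'.comp_hasDerivAt 0 hc
    simp [real_inner_comm] at this
    exact this
  have hslope : ∀ t : ℝ, t ∈ Set.Ioo (0:ℝ) 1 →
      (f (x + t • (y - x)) - f x) / t ≤ f y - f x := by
    intro t ht
    have h1 : f (x + t • (y - x)) ≤ (1 - t) * f x + t * f y := by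
      have := hf.2 (Set.mem_univ x) (Set.mem_univ y)
        (by linarith [ht.2] : (0:ℝ) ≤ 1 - t) (le_of_lt ht.1) (by ring)
      have hxy : (1 - t) • x + t • y = x + t • (y - x) := by
        module
      rw [hxy] at this
      simpa [smul_eq_mul] using this
    rw [div_le_iff₀ ht.1]
    nlinarith [ht.1]
  have htend : Tendsto (fun t : ℝ => (f (x + t • (y - x)) - f x) / t)
      (nhdsWithin 0 (Set.Ioi 0)) (nhds ⟪G, y - x⟫) := by
    have := hφ.hasDerivWithinAt (s := Set.Ioi (0:ℝ))
    have h2 := hasDerivWithinAt_iff_tendsto_slope.mp this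
    have : Tendsto (slope (fun t : ℝ => f (x + t • (y - x))) 0)
        (nhdsWithin 0 (Set.Ioi 0)) (nhds ⟪G, y - x⟫) := by
      refine h2.mono_left (nhdsWithin_mono _ ?_)
      intro t ht
      exact ⟨ht, (ne_of_gt ht)⟩
    refine this.congr' ?_
    filter_upwards [self_mem_nhdsWithin] with t ht
    simp only [slope_def_field, div_eq_inv_mul]
    rw [sub_zero]
    ring_nf
    simp
  have hle : ⟪G, y - x⟫ ≤ f y - f x := by
    refine le_of_tendsto htend ?_
    filter_upwards [Ioo_mem_nhdsGT_of_mem (by norm_num : (0:ℝ) ∈ Set.Ico (0:ℝ) 1)] with t ht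
    exact hslope t ht
  linarith


variable (S : AdaPBB n)

namespace AdaPBB

lemma alpha_pos : ∀ k, 0 < S.α k ∧ 0 ≤ S.θ k := by
  intro k
  induction k with
  | zero => exact ⟨S.hα0, S.hθ0⟩
  | succ k ih =>
    rcases le_or_gt (S.α k) (S.lam (k+1)) with h1 | h1
    · obtain ⟨hα, hθ⟩ := S.hcase1 k h1
      have hs : 0 < Real.sqrt (1 + S.θ k) := Real.sqrt_pos.mpr (by linarith [ih.2])
      have hpos : 0 < S.α (k+1) := by rw [hα]; exact mul_pos hs ih.1
      exact ⟨hpos, by rw [hθ]; exact le_of_lt (div_pos hpos ih.1)⟩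
    · rcases lt_or_ge (S.α k / 2) (S.lam (k+1)) with h2 | h2
      · obtain ⟨hα, hθ⟩ := S.hcase2 k h2 h1
        refine ⟨?_, by rw [hθ]⟩
        rw [hα]
        exact div_pos ih.1 (Real.sqrt_pos.mpr two_pos)
      · obtain ⟨hα, hθ⟩ := S.hcase3 k h2
        refine ⟨?_, by rw [hθ]⟩
        rw [hα]
        exact div_pos (S.hlampos k) (Real.sqrt_pos.mpr two_pos)

/-- convexity inequality for F with the composite subgradient at `x k` -/
lemma Fsub (k : ℕ) (y : EuclideanSpace ℝ (Fin n)) :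
    S.F (S.x k) + ⟪S.f' (S.x k) + S.ξ k, y - S.x k⟫ ≤ S.F y := by
  have h1 := grad_ineq_test S.hfconv (S.hgrad (S.x k)) y
  have h2 := S.hsub k y
  have : ⟪S.f' (S.x k) + S.ξ k, y - S.x k⟫
      = ⟪S.f' (S.x k), y - S.x k⟫ + ⟪S.ξ k, y - S.x k⟫ := inner_add_left _ _ _
  rw [AdaPBB.F, AdaPBB.F, this]
  linarith

set_option maxHeartbeats 1000000 in
lemma base (k : ℕ) (z : EuclideanSpace ℝ (Fin n)) :
    ‖S.x (k+1) - z‖^2 ≤ ‖S.x k - z‖^2 - 2*S.α k*(S.F (S.x k) - S.F z)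
      + S.α k^2 * ‖S.f' (S.x k) + S.ξ k‖^2 := by
  have hapos : 0 < S.α k := (S.alpha_pos k).1
  set a := S.α k with ha
  set h := S.f' (S.x k) with hh
  set w := S.ξ (k+1) with hw
  set v := S.ξ k with hv
  set d := h + w with hd
  have hstep' : S.x (k+1) = S.x k - a • d := S.hstep k
  have hexp : ‖S.x (k+1) - z‖^2 = ‖S.x k - z‖^2 - 2*a*⟪d, S.x k - z⟫ + a^2*‖d‖^2 := by
    have h0 : S.x (k+1) - z = (S.x k - z) - a • d := by rw [hstep']; abel
    rw [h0, norm_sub_sq_real, real_inner_smul_right, norm_smul, real_inner_comm]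
    simp only [Real.norm_eq_abs, mul_pow, sq_abs]
    ring
  have hI1 : S.f (S.x k) - S.f z ≤ ⟪h, S.x k - z⟫ := by
    have h1 := grad_ineq_test S.hfconv (S.hgrad (S.x k)) z
    have h2 : ⟪h, z - S.x k⟫ = -⟪h, S.x k - z⟫ := by
      rw [← inner_neg_right]; congr 1; abel
    rw [h2] at h1; linarith
  have hI2 : S.g (S.x (k+1)) - S.g z ≤ ⟪w, S.x (k+1) - z⟫ := by
    have h1 := S.hsub (k+1) z
    have h2 : ⟪w, z - S.x (k+1)⟫ = -⟪w, S.x (k+1) - z⟫ := by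
      rw [← inner_neg_right]; congr 1; abel
    rw [h2] at h1; linarith
  have hI3 : S.g (S.x k) - S.g (S.x (k+1)) ≤ a * ⟪v, d⟫ := by
    have h1 := S.hsub k (S.x (k+1))
    have h2 : S.x (k+1) - S.x k = -(a • d) := by rw [hstep']; abel
    rw [h2, inner_neg_right, real_inner_smul_right] at h1
    linarith
  have hsplitd : ⟪d, S.x k - z⟫ = ⟪h, S.x k - z⟫ + ⟪w, S.x k - z⟫ := by
    rw [hd, inner_add_left]
  have hsplitw : ⟪w, S.x k - z⟫ = ⟪w, S.x (k+1) - z⟫ + a * ⟪w, d⟫ := by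
    have h4 : S.x k - z = (S.x (k+1) - z) + a • d := by rw [hstep']; abel
    rw [h4, inner_add_right, real_inner_smul_right]
  have hnd : ‖d‖^2 = ‖h‖^2 + 2*⟪h, w⟫ + ‖w‖^2 := by
    rw [hd, @norm_add_sq_real]
  have hnp : ‖h + v‖^2 = ‖h‖^2 + 2*⟪h, v⟫ + ‖v‖^2 := by
    rw [@norm_add_sq_real]
  have hwd : ⟪w, d⟫ = ⟪h, w⟫ + ‖w‖^2 := by
    rw [hd, inner_add_right, real_inner_comm w h, real_inner_self_eq_norm_sq]
  have hvd : ⟪v, d⟫ = ⟪h, v⟫ + ⟪v, w⟫ := by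
    rw [hd, inner_add_right, real_inner_comm v h]
  have hAM : 2*⟪v, w⟫ ≤ ‖v‖^2 + ‖w‖^2 := by
    have h0 : (0:ℝ) ≤ ‖v - w‖^2 := by positivity
    rw [@norm_sub_sq_real] at h0
    linarith
  have hF : S.F (S.x k) = S.f (S.x k) + S.g (S.x k) := rfl
  have hFz : S.F z = S.f z + S.g z := rfl
  have ha2 : (0:ℝ) < a^2 := by positivity
  have t1 := mul_le_mul_of_nonneg_left hI1 (by linarith : (0:ℝ) ≤ 2*a)
  have t2 := mul_le_mul_of_nonneg_left hI2 (by linarith : (0:ℝ) ≤ 2*a)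
  have t3 := mul_le_mul_of_nonneg_left hI3 (by linarith : (0:ℝ) ≤ 2*a)
  have t4 := mul_le_mul_of_nonneg_left hAM (le_of_lt ha2)
  nlinarith [hexp, hsplitd, hsplitw, hnd, hnp, hwd, hvd, t1, t2, t3, t4]


section StepGeom
variable (k : ℕ)

/-- `lam (k+1) * ‖δ‖² = -(α k * ⟪δ, dd⟫)` -/
lemma lam_eq :
    S.lam (k+1) * ‖S.f' (S.x (k+1)) - S.f' (S.x k)‖^2
      = -(S.α k * ⟪S.f' (S.x (k+1)) - S.f' (S.x k), S.f' (S.x k) + S.ξ (k+1)⟫) := by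
  have hδ : S.f' (S.x (k+1)) - S.f' (S.x k) ≠ 0 := sub_ne_zero.mpr (S.hne k)
  have hδ2 : ‖S.f' (S.x (k+1)) - S.f' (S.x k)‖^2 ≠ 0 := pow_ne_zero _ (norm_ne_zero_iff.mpr hδ)
  have hx : S.x (k+1) - S.x k = -(S.α k • (S.f' (S.x k) + S.ξ (k+1))) := by
    rw [S.hstep k]; abel
  have h1 := S.hlam k
  rw [hx, inner_neg_right, real_inner_smul_right] at h1
  rw [h1]
  field_simp

lemma pk1_eq : S.f' (S.x (k+1)) + S.ξ (k+1)
    = (S.f' (S.x k) + S.ξ (k+1)) + (S.f' (S.x (k+1)) - S.f' (S.x k)) := by abel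

/-- identity (A): `α⟪p', dd⟫ = α‖p'‖² + (λ - α)‖δ‖²` -/
lemma identA :
    S.α k * ⟪S.f' (S.x (k+1)) + S.ξ (k+1), S.f' (S.x k) + S.ξ (k+1)⟫
      = S.α k * ‖S.f' (S.x (k+1)) + S.ξ (k+1)‖^2
        + (S.lam (k+1) - S.α k) * ‖S.f' (S.x (k+1)) - S.f' (S.x k)‖^2 := by
  set dd := S.f' (S.x k) + S.ξ (k+1) with hdd
  set δ := S.f' (S.x (k+1)) - S.f' (S.x k) with hδ
  have hp : S.f' (S.x (k+1)) + S.ξ (k+1) = dd + δ := S.pk1_eq k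
  have hl := S.lam_eq k
  rw [hp]
  have e1 : ⟪dd + δ, dd⟫ = ‖dd‖^2 + ⟪δ, dd⟫ := by
    rw [inner_add_left, real_inner_self_eq_norm_sq]
  have e2 : ‖dd + δ‖^2 = ‖dd‖^2 + 2*⟪dd, δ⟫ + ‖δ‖^2 := by
    rw [@norm_add_sq_real]
  have e3 : ⟪dd, δ⟫ = ⟪δ, dd⟫ := real_inner_comm _ _
  rw [e1, e2, e3]
  nlinarith [hl]

/-- identity (B): `α‖p'‖² = α‖dd‖² + (α - 2λ)‖δ‖²` -/
lemma identB :
    S.α k * ‖S.f' (S.x (k+1)) + S.ξ (k+1)‖^2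
      = S.α k * ‖S.f' (S.x k) + S.ξ (k+1)‖^2
        + (S.α k - 2*S.lam (k+1)) * ‖S.f' (S.x (k+1)) - S.f' (S.x k)‖^2 := by
  set dd := S.f' (S.x k) + S.ξ (k+1) with hdd
  set δ := S.f' (S.x (k+1)) - S.f' (S.x k) with hδ
  have hp : S.f' (S.x (k+1)) + S.ξ (k+1) = dd + δ := S.pk1_eq k
  have hl := S.lam_eq k
  rw [hp]
  have e2 : ‖dd + δ‖^2 = ‖dd‖^2 + 2*⟪dd, δ⟫ + ‖δ‖^2 := by
    rw [@norm_add_sq_real]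
  have e3 : ⟪dd, δ⟫ = ⟪δ, dd⟫ := real_inner_comm _ _
  rw [e2, e3]
  nlinarith [hl]

/-- Cauchy–Schwarz bound (C): `λ²‖δ‖² ≤ α²‖dd‖²` -/
lemma identC :
    S.lam (k+1)^2 * ‖S.f' (S.x (k+1)) - S.f' (S.x k)‖^2
      ≤ S.α k^2 * ‖S.f' (S.x k) + S.ξ (k+1)‖^2 := by
  set dd := S.f' (S.x k) + S.ξ (k+1) with hdd
  set δ := S.f' (S.x (k+1)) - S.f' (S.x k) with hδ
  have hδ0 : δ ≠ 0 := sub_ne_zero.mpr (S.hne k)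
  have hδ2 : (0:ℝ) < ‖δ‖^2 := pow_pos (norm_pos_iff.mpr hδ0) 2
  have hl := S.lam_eq k
  have hcs : ⟪δ, dd⟫^2 ≤ ‖δ‖^2 * ‖dd‖^2 := by
    have := abs_real_inner_le_norm δ dd
    have h2 : ⟪δ, dd⟫^2 ≤ (‖δ‖*‖dd‖)^2 := by
      rw [← sq_abs]
      exact pow_le_pow_left₀ (abs_nonneg _) this 2
    nlinarith [h2]
  have hsq : (S.lam (k+1) * ‖δ‖^2)^2 = S.α k^2 * ⟪δ, dd⟫^2 := by
    rw [hl]; ring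
  have h3 : S.lam (k+1)^2 * ‖δ‖^2 * ‖δ‖^2 ≤ S.α k^2 * ‖dd‖^2 * ‖δ‖^2 := by
    nlinarith [hsq, hcs, sq_nonneg (S.α k)]
  exact le_of_mul_le_mul_right (by linarith [h3]) hδ2

/-- (D): `‖dd‖ ≤ ‖p k‖` -/
lemma identD : ‖S.f' (S.x k) + S.ξ (k+1)‖ ≤ ‖S.f' (S.x k) + S.ξ k‖ := by
  set dd := S.f' (S.x k) + S.ξ (k+1) with hdd
  set p := S.f' (S.x k) + S.ξ k with hp
  have hapos : 0 < S.α k := (S.alpha_pos k).1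
  have hmono : ⟪dd - p, dd⟫ ≤ 0 := by
    have h1 := S.hsub k (S.x (k+1))
    have h2 := S.hsub (k+1) (S.x k)
    have hx : S.x (k+1) - S.x k = -(S.α k • dd) := by rw [S.hstep k]; abel
    have hx2 : S.x k - S.x (k+1) = S.α k • dd := by rw [S.hstep k]; abel
    rw [hx] at h1
    rw [hx2] at h2
    rw [inner_neg_right, real_inner_smul_right] at h1
    rw [real_inner_smul_right] at h2
    have hdp : dd - p = S.ξ (k+1) - S.ξ k := by rw [hdd, hp]; abel
    rw [hdp, inner_sub_left]
    have key : S.α k * ⟪S.ξ (k+1), dd⟫ ≤ S.α k * ⟪S.ξ k, dd⟫ := by linarith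
    have key2 := le_of_mul_le_mul_left key hapos
    linarith
  have hcs : ⟪p, dd⟫ ≤ ‖p‖ * ‖dd‖ := real_inner_le_norm p dd
  have h3 : ‖dd‖^2 ≤ ‖p‖ * ‖dd‖ := by
    have e1 : ⟪dd - p, dd⟫ = ‖dd‖^2 - ⟪p, dd⟫ := by
      rw [inner_sub_left, real_inner_self_eq_norm_sq]
    nlinarith [hmono, e1, hcs]
  rcases eq_or_lt_of_le (norm_nonneg dd) with h0 | h0
  · rw [← h0]; exact norm_nonneg p
  · exact le_of_mul_le_mul_right (by nlinarith [h3]) h0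

/-- (E): `F(x k) - F(x (k+1)) ≥ α ⟪p', dd⟫` -/
lemma identE :
    S.α k * ⟪S.f' (S.x (k+1)) + S.ξ (k+1), S.f' (S.x k) + S.ξ (k+1)⟫
      ≤ S.F (S.x k) - S.F (S.x (k+1)) := by
  have h1 := grad_ineq_test S.hfconv (S.hgrad (S.x (k+1))) (S.x k)
  have h2 := S.hsub (k+1) (S.x k)
  have hx2 : S.x k - S.x (k+1) = S.α k • (S.f' (S.x k) + S.ξ (k+1)) := by
    rw [S.hstep k]; abel
  rw [hx2, real_inner_smul_right] at h1 h2
  have e : ⟪S.f' (S.x (k+1)) + S.ξ (k+1), S.f' (S.x k) + S.ξ (k+1)⟫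
      = ⟪S.f' (S.x (k+1)), S.f' (S.x k) + S.ξ (k+1)⟫
        + ⟪S.ξ (k+1), S.f' (S.x k) + S.ξ (k+1)⟫ := inner_add_left _ _ _
  rw [e]
  show _ ≤ (S.f (S.x k) + S.g (S.x k)) - (S.f (S.x (k+1)) + S.g (S.x (k+1)))
  nlinarith [h1, h2]

/-- (P1): in case i, `α‖p'‖² ≤ F(x k) - F(x (k+1))`. -/
lemma P1 (h1 : S.α k ≤ S.lam (k+1)) :
    S.α k * ‖S.f' (S.x (k+1)) + S.ξ (k+1)‖^2 ≤ S.F (S.x k) - S.F (S.x (k+1)) := by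
  have hA := S.identA k
  have hE := S.identE k
  have hδ : (0:ℝ) ≤ ‖S.f' (S.x (k+1)) - S.f' (S.x k)‖^2 := by positivity
  nlinarith [hA, hE, hδ]

/-- (P2): in cases ii and iii, `‖p'‖² ≤ B(k+1)·‖p k‖²`. -/
lemma P2 (h1 : S.lam (k+1) < S.α k) :
    ‖S.f' (S.x (k+1)) + S.ξ (k+1)‖^2 ≤ S.B (k+1) * ‖S.f' (S.x k) + S.ξ k‖^2 := by
  have hapos : 0 < S.α k := (S.alpha_pos k).1
  have hlpos : 0 < S.lam (k+1) := S.hlampos k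
  have hB : S.B (k+1) = if S.α k ≤ S.lam (k+1) then 0
      else if S.α k / 2 < S.lam (k+1) then 1
      else (S.α k - S.lam (k+1))^2 / S.lam (k+1)^2 := rfl
  have hD := S.identD k
  have hD2 : ‖S.f' (S.x k) + S.ξ (k+1)‖^2 ≤ ‖S.f' (S.x k) + S.ξ k‖^2 := by
    nlinarith [hD, norm_nonneg (S.f' (S.x k) + S.ξ (k+1)), norm_nonneg (S.f' (S.x k) + S.ξ k)]
  have hBid := S.identB k
  rcases lt_or_ge (S.α k / 2) (S.lam (k+1)) with h2 | h2
  · -- case ii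
    rw [hB, if_neg (not_le.mpr h1), if_pos h2]
    have : S.α k * ‖S.f' (S.x (k+1)) + S.ξ (k+1)‖^2
        ≤ S.α k * ‖S.f' (S.x k) + S.ξ (k+1)‖^2 := by
      nlinarith [hBid, sq_nonneg ‖S.f' (S.x (k+1)) - S.f' (S.x k)‖]
    have h4 := le_of_mul_le_mul_left this hapos
    linarith [hD2]
  · -- case iii
    rw [hB, if_neg (not_le.mpr h1), if_neg (not_lt.mpr h2)]
    have hC := S.identC k
    set lam := S.lam (k+1)
    set a := S.α k
    set ndel := ‖S.f' (S.x (k+1)) - S.f' (S.x k)‖^2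
    set np' := ‖S.f' (S.x (k+1)) + S.ξ (k+1)‖^2
    set ndd := ‖S.f' (S.x k) + S.ξ (k+1)‖^2
    set npk := ‖S.f' (S.x k) + S.ξ k‖^2
    -- a*np' = a*ndd + (a-2lam)*ndel,  lam^2*ndel ≤ a^2*ndd, ndd ≤ npk
    -- goal : np' ≤ (a-lam)^2/lam^2 * npk
    rw [div_mul_eq_mul_div, le_div_iff₀ (by positivity)]
    have hndel : lam^2 * ndel ≤ a^2 * ndd := hC
    have h5 : (0:ℝ) ≤ a - 2*lam := by linarith
    have h6 : a * np' * lam^2 ≤ (a * ndd) * lam^2 + (a-2*lam) * (a^2 * ndd) := by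
      nlinarith [hBid, hndel, h5]
    have h7 : a * (np' * lam^2) ≤ a * ((a-lam)^2 * ndd) := by nlinarith [h6]
    have h8 := le_of_mul_le_mul_left h7 hapos
    have h9 : (0:ℝ) ≤ (a-lam)^2 := sq_nonneg _
    nlinarith [h8, hD2, h9]

end StepGeom


lemma U_succ (z : EuclideanSpace ℝ (Fin n)) (k : ℕ) :
    S.U z (k+1) = ‖S.x (k+1) - z‖^2
      + 2*S.B (k+1)*S.α (k+1)^2*‖S.f' (S.x k) + S.ξ k‖^2
      + 2*S.E (k+1)*S.α (k+1)^2*(S.F (S.x k) - S.F z) := rfl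

lemma E_succ (k : ℕ) :
    S.E (k+1) = if S.α k ≤ S.lam (k+1) then 1/S.α k else 0 := rfl

lemma B_succ (k : ℕ) :
    S.B (k+1) = if S.α k ≤ S.lam (k+1) then 0
      else if S.α k / 2 < S.lam (k+1) then 1
      else (S.α k - S.lam (k+1))^2 / S.lam (k+1)^2 := rfl

lemma B_nonneg (k : ℕ) : 0 ≤ S.B (k+1) := by
  rw [S.B_succ k]
  split_ifs with h1 h2
  · norm_num
  · norm_num
  · positivity

lemma E_nonneg (k : ℕ) : 0 ≤ S.E (k+1) := by
  rw [S.E_succ k]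
  split_ifs with h1
  · have := (S.alpha_pos k).1; positivity
  · norm_num

set_option maxHeartbeats 1600000 in
/-- Master decrease: for `k ≥ 1`, `U_{k+1} + r_k ≤ U_k`. -/
lemma master (m : ℕ) (z : EuclideanSpace ℝ (Fin n)) (hz : ∀ y, S.F z ≤ S.F y) :
    S.U z (m+2) + (if S.α (m+1) ≤ S.lam (m+2)
        then S.α (m+1)^2 * ‖S.f' (S.x (m+1)) + S.ξ (m+1)‖^2
        else 2*S.α (m+1)*(S.F (S.x (m+1)) - S.F z)) ≤ S.U z (m+1) := by
  have hapos : 0 < S.α m := (S.alpha_pos m).1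
  have ha'pos : 0 < S.α (m+1) := (S.alpha_pos (m+1)).1
  have hθ : 0 ≤ S.θ (m+1) := (S.alpha_pos (m+1)).2
  have hpn0 : (0:ℝ) ≤ ‖S.f' (S.x (m+1)) + S.ξ (m+1)‖^2 := by positivity
  have hqn0 : (0:ℝ) ≤ ‖S.f' (S.x m) + S.ξ m‖^2 := by positivity
  have hεm0 : 0 ≤ S.F (S.x m) - S.F z := by linarith [hz (S.x m)]
  have hε10 : 0 ≤ S.F (S.x (m+1)) - S.F z := by linarith [hz (S.x (m+1))]
  have hbase := S.base (m+1) z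
  have key1 : S.U z (m+2) + (if S.α (m+1) ≤ S.lam (m+2)
        then S.α (m+1)^2 * ‖S.f' (S.x (m+1)) + S.ξ (m+1)‖^2
        else 2*S.α (m+1)*(S.F (S.x (m+1)) - S.F z))
      ≤ ‖S.x (m+1) - z‖^2 + 2*S.α (m+1)^2*‖S.f' (S.x (m+1)) + S.ξ (m+1)‖^2
        + 2*S.θ (m+1)*S.α (m+1)*(S.F (S.x (m+1)) - S.F z) := by
    rw [S.U_succ z (m+1), S.E_succ (m+1), S.B_succ (m+1)]
    rcases le_or_gt (S.α (m+1)) (S.lam (m+2)) with c1 | c1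
    · obtain ⟨hα2, _⟩ := S.hcase1 (m+1) c1
      have hα2sq : S.α (m+1+1)^2 = (1 + S.θ (m+1)) * S.α (m+1)^2 := by
        rw [hα2, mul_pow, Real.sq_sqrt (by linarith : (0:ℝ) ≤ 1 + S.θ (m+1))]
      rw [if_pos c1, if_pos c1, if_pos c1, hα2sq]
      have expand : 2*(1/S.α (m+1))*((1 + S.θ (m+1))*S.α (m+1)^2)*(S.F (S.x (m+1)) - S.F z)
          = 2*S.α (m+1)*(S.F (S.x (m+1)) - S.F z)
            + 2*S.θ (m+1)*S.α (m+1)*(S.F (S.x (m+1)) - S.F z) := by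
        field_simp
      nlinarith [hbase, expand]
    · rw [if_neg (not_le.mpr c1), if_neg (not_le.mpr c1), if_neg (not_le.mpr c1)]
      have hΛpos : 0 < S.lam (m+2) := S.hlampos (m+1)
      have hθ0 : 0 ≤ 2*S.θ (m+1)*S.α (m+1)*(S.F (S.x (m+1)) - S.F z) := by
        have : (0:ℝ) ≤ 2*S.θ (m+1)*S.α (m+1) := by positivity
        exact mul_nonneg this hε10
      rcases lt_or_ge (S.α (m+1)/2) (S.lam (m+2)) with c2 | c2
      · obtain ⟨hα2, _⟩ := S.hcase2 (m+1) c2 c1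
        have hα2sq : S.α (m+1+1)^2 = S.α (m+1)^2/2 := by
          rw [hα2, div_pow, Real.sq_sqrt (by norm_num : (0:ℝ) ≤ 2)]
        rw [if_pos c2, hα2sq]
        nlinarith [hbase, hθ0]
      · obtain ⟨hα2, _⟩ := S.hcase3 (m+1) c2
        have hα2sq : S.α (m+1+1)^2 = S.lam (m+2)^2/2 := by
          rw [hα2, div_pow, Real.sq_sqrt (by norm_num : (0:ℝ) ≤ 2)]
        rw [if_neg (not_lt.mpr c2), hα2sq]
        have hBco : 2*((S.α (m+1) - S.lam (m+2))^2/S.lam (m+2)^2)*(S.lam (m+2)^2/2)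
            = (S.α (m+1) - S.lam (m+2))^2 := by
          field_simp
        have hsq : (S.α (m+1) - S.lam (m+2))^2 ≤ S.α (m+1)^2 := by nlinarith [hΛpos, c2]
        nlinarith [hbase, hBco, hsq, hpn0, hθ0]
  have key2 : ‖S.x (m+1) - z‖^2 + 2*S.α (m+1)^2*‖S.f' (S.x (m+1)) + S.ξ (m+1)‖^2
        + 2*S.θ (m+1)*S.α (m+1)*(S.F (S.x (m+1)) - S.F z) ≤ S.U z (m+1) := by
    rw [S.U_succ z m, S.E_succ m, S.B_succ m]
    rcases le_or_gt (S.α m) (S.lam (m+1)) with d1 | d1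
    · have hθ1 : S.θ (m+1) = S.α (m+1)/S.α m := (S.hcase1 m d1).2
      rw [if_pos d1, if_pos d1]
      have hP1 := S.P1 m d1
      have hco : (0:ℝ) ≤ 2*S.α (m+1)^2/S.α m := by positivity
      have h8 := mul_le_mul_of_nonneg_left hP1 hco
      have h9 : 2*S.α (m+1)^2/S.α m*(S.α m * ‖S.f' (S.x (m+1)) + S.ξ (m+1)‖^2)
          = 2*S.α (m+1)^2*‖S.f' (S.x (m+1)) + S.ξ (m+1)‖^2 := by
        field_simp
      rw [h9] at h8
      have hθterm : 2*S.θ (m+1)*S.α (m+1)*(S.F (S.x (m+1)) - S.F z)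
          = 2*S.α (m+1)^2/S.α m*(S.F (S.x (m+1)) - S.F z) := by
        rw [hθ1]; ring
      have hEterm : 2*(1/S.α m)*S.α (m+1)^2*(S.F (S.x m) - S.F z)
          = 2*S.α (m+1)^2/S.α m*(S.F (S.x m) - S.F z) := by
        ring
      rw [hθterm, hEterm]
      have hsplit : 2*S.α (m+1)^2/S.α m*(S.F (S.x m) - S.F (S.x (m+1)))
          = 2*S.α (m+1)^2/S.α m*(S.F (S.x m) - S.F z)
            - 2*S.α (m+1)^2/S.α m*(S.F (S.x (m+1)) - S.F z) := by ring
      rw [hsplit] at h8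
      linarith [h8]
    · have hθ1 : S.θ (m+1) = 0 := by
        rcases lt_or_ge (S.α m/2) (S.lam (m+1)) with d2 | d2
        · exact (S.hcase2 m d2 d1).2
        · exact (S.hcase3 m d2).2
      have hP2 := S.P2 m d1
      rw [if_neg (not_le.mpr d1), if_neg (not_le.mpr d1), hθ1]
      have hB : S.B (m+1) = if S.α m / 2 < S.lam (m+1) then (1:ℝ)
          else (S.α m - S.lam (m+1))^2/S.lam (m+1)^2 := by
        rw [S.B_succ m, if_neg (not_le.mpr d1)]
      rw [← hB]
      have h8 := mul_le_mul_of_nonneg_left hP2 (by positivity : (0:ℝ) ≤ 2*S.α (m+1)^2)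
      nlinarith [h8]
  calc S.U z (m+2) + _ ≤ _ := key1
  _ ≤ S.U z (m+1) := key2


lemma coefB (k : ℕ) : 2*S.B (k+1)*S.α (k+1)^2 ≤ S.α k^2 := by
  rw [S.B_succ k]
  rcases le_or_gt (S.α k) (S.lam (k+1)) with c1 | c1
  · rw [if_pos c1]; nlinarith [sq_nonneg (S.α k)]
  · rw [if_neg (not_le.mpr c1)]
    have hΛpos : 0 < S.lam (k+1) := S.hlampos k
    rcases lt_or_ge (S.α k/2) (S.lam (k+1)) with c2 | c2
    · rw [if_pos c2]
      have hα2sq : S.α (k+1)^2 = S.α k^2/2 := by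
        rw [(S.hcase2 k c2 c1).1, div_pow, Real.sq_sqrt (by norm_num : (0:ℝ) ≤ 2)]
      rw [hα2sq]; linarith
    · rw [if_neg (not_lt.mpr c2)]
      have hα2sq : S.α (k+1)^2 = S.lam (k+1)^2/2 := by
        rw [(S.hcase3 k c2).1, div_pow, Real.sq_sqrt (by norm_num : (0:ℝ) ≤ 2)]
      rw [hα2sq]
      have hBco : 2*((S.α k - S.lam (k+1))^2/S.lam (k+1)^2)*(S.lam (k+1)^2/2)
          = (S.α k - S.lam (k+1))^2 := by field_simp
      rw [hBco]
      nlinarith [hΛpos, c2]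

lemma U1_le (xs : EuclideanSpace ℝ (Fin n)) (hxs : ∀ y, S.F xs ≤ S.F y) :
    S.U xs 1 ≤ ‖S.x 0 - xs‖^2 + 2*S.α 0^2*‖S.f' (S.x 0) + S.ξ 0‖^2
      + max (2*(S.E 1*S.α 1^2 - S.α 0)) 0 * (S.F (S.x 0) - S.F xs) := by
  have hbase := S.base 0 xs
  have hcoef := S.coefB 0
  have hε0 : 0 ≤ S.F (S.x 0) - S.F xs := by linarith [hxs (S.x 0)]
  have hq0 : (0:ℝ) ≤ ‖S.f' (S.x 0) + S.ξ 0‖^2 := by positivity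
  have hmax : 2*(S.E 1*S.α 1^2 - S.α 0) ≤ max (2*(S.E 1*S.α 1^2 - S.α 0)) 0 := le_max_left _ _
  have hmax2 : (2*(S.E 1*S.α 1^2 - S.α 0)) * (S.F (S.x 0) - S.F xs)
      ≤ max (2*(S.E 1*S.α 1^2 - S.α 0)) 0 * (S.F (S.x 0) - S.F xs) :=
    mul_le_mul_of_nonneg_right hmax hε0
  have hU : S.U xs 1 = ‖S.x 1 - xs‖^2 + 2*S.B 1*S.α 1^2*‖S.f' (S.x 0) + S.ξ 0‖^2
      + 2*S.E 1*S.α 1^2*(S.F (S.x 0) - S.F xs) := S.U_succ xs 0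
  rw [hU]
  nlinarith [hbase, mul_le_mul_of_nonneg_right hcoef hq0, hmax2]

lemma r_nonneg (m : ℕ) (z : EuclideanSpace ℝ (Fin n)) (hz : ∀ y, S.F z ≤ S.F y) :
    0 ≤ (if S.α (m+1) ≤ S.lam (m+2)
        then S.α (m+1)^2 * ‖S.f' (S.x (m+1)) + S.ξ (m+1)‖^2
        else 2*S.α (m+1)*(S.F (S.x (m+1)) - S.F z)) := by
  split_ifs with h1
  · positivity
  · have := (S.alpha_pos (m+1)).1
    have h2 : 0 ≤ S.F (S.x (m+1)) - S.F z := by linarith [hz (S.x (m+1))]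
    positivity

lemma U_antitone (z : EuclideanSpace ℝ (Fin n)) (hz : ∀ y, S.F z ≤ S.F y) :
    Antitone (fun k => S.U z (k+1)) := by
  apply antitone_nat_of_succ_le
  intro m
  have h1 := S.master m z hz
  have h2 := S.r_nonneg m z hz
  show S.U z (m+1+1) ≤ S.U z (m+1)
  linarith

lemma U_ge (z : EuclideanSpace ℝ (Fin n)) (hz : ∀ y, S.F z ≤ S.F y) (k : ℕ) :
    ‖S.x (k+1) - z‖^2 ≤ S.U z (k+1) := by
  rw [S.U_succ z k]
  have h1 := S.B_nonneg k
  have h2 := S.E_nonneg k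
  have h3 : 0 ≤ S.F (S.x k) - S.F z := by linarith [hz (S.x k)]
  have h4 : (0:ℝ) ≤ ‖S.f' (S.x k) + S.ξ k‖^2 := by positivity
  have h5 := sq_nonneg (S.α (k+1))
  nlinarith [mul_nonneg (mul_nonneg h1 h5) h4, mul_nonneg (mul_nonneg h2 h5) h3]

lemma U_nonneg (z : EuclideanSpace ℝ (Fin n)) (hz : ∀ y, S.F z ≤ S.F y) (k : ℕ) :
    0 ≤ S.U z (k+1) := le_trans (by positivity) (S.U_ge z hz k)



section WithBall
variable (xs : EuclideanSpace ℝ (Fin n)) (hxs : ∀ y, S.F xs ≤ S.F y) (T : ℝ) (hT0 : 0 ≤ T)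

lemma ball_mem (hxs : ∀ y, S.F xs ≤ S.F y) (hT0 : 0 ≤ T)
    (hT2 : T ^ 2 = ‖S.x 0 - xs‖ ^ 2 + 2 * S.α 0 ^ 2 * ‖S.f' (S.x 0) + S.ξ 0‖ ^ 2 +
      max (2 * (S.E 1 * S.α 1 ^ 2 - S.α 0)) 0 * (S.F (S.x 0) - S.F xs)) :
    ∀ k, ‖S.x k - xs‖ ≤ T := by
  have key : ∀ v : EuclideanSpace ℝ (Fin n), ‖v‖^2 ≤ T^2 → ‖v‖ ≤ T := by
    intro v h
    nlinarith [norm_nonneg v, hT0]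
  have hε0 : 0 ≤ S.F (S.x 0) - S.F xs := by linarith [hxs (S.x 0)]
  have hmax : (0:ℝ) ≤ max (2*(S.E 1*S.α 1^2 - S.α 0)) 0 := le_max_right _ _
  intro k
  match k with
  | 0 =>
    apply key
    rw [hT2]
    have h1 : (0:ℝ) ≤ 2*S.α 0^2*‖S.f' (S.x 0) + S.ξ 0‖^2 := by positivity
    nlinarith [mul_nonneg hmax hε0]
  | (k+1) =>
    apply key
    have h1 := S.U_ge xs hxs k
    have h2 : S.U xs (k+1) ≤ S.U xs (0+1) := S.U_antitone xs hxs (Nat.zero_le k)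
    have h3 := S.U1_le xs hxs
    rw [← hT2] at h3
    simpa using le_trans h1 (le_trans h2 (by simpa using h3))

variable (L : ℝ) (hL : 0 < L)

lemma lam_ge
    (hcoco : ∀ x y : EuclideanSpace ℝ (Fin n), ‖x - xs‖ ≤ T → ‖y - xs‖ ≤ T →
      (1 / L) * ‖S.f' x - S.f' y‖ ^ 2 ≤ ⟪S.f' x - S.f' y, x - y⟫)
    (hball : ∀ k, ‖S.x k - xs‖ ≤ T) (k : ℕ) :
    1/L ≤ S.lam (k+1) := by
  have hδ : S.f' (S.x (k+1)) - S.f' (S.x k) ≠ 0 := sub_ne_zero.mpr (S.hne k)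
  have hδ2 : (0:ℝ) < ‖S.f' (S.x (k+1)) - S.f' (S.x k)‖^2 :=
    pow_pos (norm_pos_iff.mpr hδ) 2
  have hc := hcoco (S.x (k+1)) (S.x k) (hball (k+1)) (hball k)
  rw [S.hlam k, le_div_iff₀ hδ2]
  linarith

lemma alpha_ge
    (hcoco : ∀ x y : EuclideanSpace ℝ (Fin n), ‖x - xs‖ ≤ T → ‖y - xs‖ ≤ T →
      (1 / L) * ‖S.f' x - S.f' y‖ ^ 2 ≤ ⟪S.f' x - S.f' y, x - y⟫)
    (hball : ∀ k, ‖S.x k - xs‖ ≤ T) :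
    ∀ k, min (S.α 0) (1/(Real.sqrt 2 * L)) ≤ S.α k := by
  have hs2 : (0:ℝ) < Real.sqrt 2 := Real.sqrt_pos.mpr (by norm_num)
  intro k
  induction k with
  | zero => exact min_le_left _ _
  | succ k ih =>
    have hlam := S.lam_ge xs T L hcoco hball k
    have hmin : min (S.α 0) (1/(Real.sqrt 2 * L)) ≤ 1/(Real.sqrt 2 * L) := min_le_right _ _
    have hconv : 1/(Real.sqrt 2 * L) = (1/L)/Real.sqrt 2 := by ring
    rcases le_or_gt (S.α k) (S.lam (k+1)) with c1 | c1
    · have hα2 := (S.hcase1 k c1).1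
      have hθ : 0 ≤ S.θ k := (S.alpha_pos k).2
      have hs : 1 ≤ Real.sqrt (1 + S.θ k) := by
        have h5 := Real.sqrt_le_sqrt (show (1:ℝ) ≤ 1 + S.θ k by linarith)
        rwa [Real.sqrt_one] at h5
      have hα := (S.alpha_pos k).1
      calc min (S.α 0) (1/(Real.sqrt 2 * L)) ≤ S.α k := ih
      _ = 1 * S.α k := by ring
      _ ≤ Real.sqrt (1 + S.θ k) * S.α k := by
          exact mul_le_mul_of_nonneg_right hs (le_of_lt hα)
      _ = S.α (k+1) := hα2.symm
    · rcases lt_or_ge (S.α k/2) (S.lam (k+1)) with c2 | c2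
      · have hα2 := (S.hcase2 k c2 c1).1
        rw [hα2]
        calc min (S.α 0) (1/(Real.sqrt 2 * L)) ≤ (1/L)/Real.sqrt 2 := by
              rw [← hconv]; exact hmin
        _ ≤ S.lam (k+1)/Real.sqrt 2 := by
              apply div_le_div_of_nonneg_right ?_ hs2.le
              exact hlam
        _ ≤ S.α k/Real.sqrt 2 := by
              apply div_le_div_of_nonneg_right (le_of_lt c1) hs2.le
      · have hα2 := (S.hcase3 k c2).1
        rw [hα2]
        calc min (S.α 0) (1/(Real.sqrt 2 * L)) ≤ (1/L)/Real.sqrt 2 := by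
              rw [← hconv]; exact hmin
        _ ≤ S.lam (k+1)/Real.sqrt 2 := by
              apply div_le_div_of_nonneg_right ?_ hs2.le
              exact hlam

end WithBall

/-- `F(x k) - F xs ≤ T ‖p k‖` when `x k` is in the ball. -/
lemma ebound (xs : EuclideanSpace ℝ (Fin n)) (T : ℝ) (k : ℕ)
    (hball : ‖S.x k - xs‖ ≤ T) :
    S.F (S.x k) - S.F xs ≤ T * ‖S.f' (S.x k) + S.ξ k‖ := by
  have h1 := S.Fsub k xs
  have h2 : ⟪S.f' (S.x k) + S.ξ k, xs - S.x k⟫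
      = -⟪S.f' (S.x k) + S.ξ k, S.x k - xs⟫ := by
    rw [← inner_neg_right]; congr 1; abel
  rw [h2] at h1
  have h3 : ⟪S.f' (S.x k) + S.ξ k, S.x k - xs⟫ ≤ ‖S.f' (S.x k) + S.ξ k‖ * ‖S.x k - xs‖ :=
    real_inner_le_norm _ _
  have h4 : ‖S.f' (S.x k) + S.ξ k‖ * ‖S.x k - xs‖ ≤ ‖S.f' (S.x k) + S.ξ k‖ * T :=
    mul_le_mul_of_nonneg_left hball (norm_nonneg _)
  nlinarith [h1, h3, h4]

/-- difference of energies w.r.t. two minimizers -/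
lemma U_diff (xs z : EuclideanSpace ℝ (Fin n)) (hFz : S.F z = S.F xs) (k : ℕ) :
    S.U z (k+1) - S.U xs (k+1) = ‖S.x (k+1) - z‖^2 - ‖S.x (k+1) - xs‖^2 := by
  rw [S.U_succ z k, S.U_succ xs k, hFz]
  ring


end AdaPBB
end XX


set_option maxHeartbeats 2000000 in
open scoped RealInnerProductSpace in
/-- Theorem 5.14 (pointwise convergence of AdaPBB): the sequence `{x^k}` generated by the
AdaPBB iteration converges to a minimizer of `F = f + g`. -/
theorem adapbb_pointwise_convergence (n : ℕ) (S : AdaPBB n)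
    (xs : EuclideanSpace ℝ (Fin n)) (hxs : ∀ y, S.F xs ≤ S.F y)
    (T : ℝ) (hT0 : 0 ≤ T)
    (hT2 : T ^ 2 = ‖S.x 0 - xs‖ ^ 2 + 2 * S.α 0 ^ 2 * ‖S.f' (S.x 0) + S.ξ 0‖ ^ 2 +
      max (2 * (S.E 1 * S.α 1 ^ 2 - S.α 0)) 0 * (S.F (S.x 0) - S.F xs))
    (L : ℝ) (hL : 0 < L)
    (hsmooth : ∀ x y : EuclideanSpace ℝ (Fin n), ‖x - xs‖ ≤ T → ‖y - xs‖ ≤ T →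
      (1 / (2 * L)) * ‖S.f' x - S.f' y‖ ^ 2 ≤ S.f x - S.f y - ⟪S.f' y, x - y⟫)
    (hcoco : ∀ x y : EuclideanSpace ℝ (Fin n), ‖x - xs‖ ≤ T → ‖y - xs‖ ≤ T →
      (1 / L) * ‖S.f' x - S.f' y‖ ^ 2 ≤ ⟪S.f' x - S.f' y, x - y⟫) :
    ∃ z, (∀ y, S.F z ≤ S.F y) ∧ Filter.Tendsto S.x Filter.atTop (nhds z) := by
  classical
  -- continuity of F
  have hfc : Continuous S.f :=
    continuous_iff_continuousAt.mpr fun y => (S.hgrad y).hasFDerivAt.continuousAt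
  have hgc : Continuous S.g := S.hgconv.locallyLipschitz.continuous
  have hFc : Continuous S.F := by
    have : S.F = fun y => S.f y + S.g y := rfl
    rw [this]; exact hfc.add hgc
  -- ball membership
  have hball : ∀ k, ‖S.x k - xs‖ ≤ T := S.ball_mem xs T hxs hT0 hT2
  -- stepsize lower bound
  obtain ⟨μ, hμ⟩ : ∃ μ : ℝ, μ = min (S.α 0) (1/(Real.sqrt 2 * L)) := ⟨_, rfl⟩
  have hs2 : (0:ℝ) < Real.sqrt 2 := Real.sqrt_pos.mpr (by norm_num)
  have hμpos : 0 < μ := by rw [hμ]; exact lt_min S.hα0 (by positivity)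
  have hαge : ∀ k, μ ≤ S.α k := by rw [hμ]; exact S.alpha_ge xs T L hcoco hball
  -- convergence of energies
  have Uconv : ∀ z : EuclideanSpace ℝ (Fin n), (∀ y, S.F z ≤ S.F y) →
      ∃ c, Filter.Tendsto (fun k => S.U z (k+1)) Filter.atTop (nhds c) := by
    intro z hz
    refine ⟨⨅ k, S.U z (k+1), tendsto_atTop_ciInf (S.U_antitone z hz) ⟨0, ?_⟩⟩
    rintro y ⟨k, rfl⟩
    exact S.U_nonneg z hz k
  obtain ⟨c0, hc0⟩ := Uconv xs hxs
  -- the residuals tend to zero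
  have hrt : Filter.Tendsto (fun m => S.U xs (m+1) - S.U xs (m+2)) Filter.atTop (nhds 0) := by
    have h1 : Filter.Tendsto (fun m => S.U xs (m+1+1)) Filter.atTop (nhds c0) :=
      hc0.comp (Filter.tendsto_add_atTop_nat 1)
    have h2 := hc0.sub h1
    simpa using h2
  obtain ⟨e, he⟩ : ∃ e : ℕ → ℝ, e = fun k => S.F (S.x k) - S.F xs := ⟨_, rfl⟩
  have he0 : ∀ k, 0 ≤ e k := fun k => by rw [he]; simp only []; linarith [hxs (S.x k)]
  obtain ⟨rr, hrr⟩ : ∃ rr : ℕ → ℝ, rr = fun m => S.U xs (m+1) - S.U xs (m+2) := ⟨_, rfl⟩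
  have hrt' : Filter.Tendsto rr Filter.atTop (nhds 0) := by rw [hrr]; exact hrt
  have hrr0 : ∀ m, 0 ≤ rr m := by
    intro m
    have h1 := S.master m xs hxs
    have h2 := S.r_nonneg m xs hxs
    rw [hrr]
    simp only []
    linarith
  -- key quantitative bound
  have hsq : ∀ m, μ^2*(e (m+1))^2 ≤ (rr m)^2/4 + T^2*(rr m) := by
    intro m
    have hmas := S.master m xs hxs
    have hα' : 0 < S.α (m+1) := (S.alpha_pos (m+1)).1
    have hαμ : μ ≤ S.α (m+1) := hαge (m+1)
    have hem : 0 ≤ e (m+1) := he0 (m+1)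
    by_cases c1 : S.α (m+1) ≤ S.lam (m+2)
    · rw [if_pos c1] at hmas
      have hrle : S.α (m+1)^2 * ‖S.f' (S.x (m+1)) + S.ξ (m+1)‖^2 ≤ rr m := by
        rw [hrr]; simp only []; linarith
      have heb : e (m+1) ≤ T * ‖S.f' (S.x (m+1)) + S.ξ (m+1)‖ := by
        rw [he]; exact S.ebound xs T (m+1) (hball (m+1))
      have h3 : μ * e (m+1) ≤ S.α (m+1) * (T * ‖S.f' (S.x (m+1)) + S.ξ (m+1)‖) := by
        have := mul_le_mul hαμ heb hem (le_of_lt hα')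
        linarith [this]
      have h4 : μ^2*(e (m+1))^2 ≤ T^2*(S.α (m+1)^2 * ‖S.f' (S.x (m+1)) + S.ξ (m+1)‖^2) := by
        nlinarith [h3, mul_nonneg (le_of_lt hμpos) hem, norm_nonneg (S.f' (S.x (m+1)) + S.ξ (m+1)), hT0, hα'.le]
      have h5 : T^2*(S.α (m+1)^2 * ‖S.f' (S.x (m+1)) + S.ξ (m+1)‖^2) ≤ T^2*(rr m) :=
        mul_le_mul_of_nonneg_left hrle (by positivity)
      have h6 : (0:ℝ) ≤ rr m ^2/4 := by positivity
      linarith [h4, h5, h6]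
    · rw [if_neg c1] at hmas
      have hrle : 2*S.α (m+1)*(e (m+1)) ≤ rr m := by
        rw [hrr, he]; simp only []; linarith
      have h3 : μ * e (m+1) ≤ rr m / 2 := by
        have h4 : μ * e (m+1) ≤ S.α (m+1) * e (m+1) := mul_le_mul_of_nonneg_right hαμ hem
        linarith
      have h5 : 0 ≤ μ * e (m+1) := mul_nonneg (le_of_lt hμpos) hem
      have h6 := mul_le_mul h3 h3 h5 (le_trans h5 h3)
      have h7 : (0:ℝ) ≤ T^2 * rr m := mul_nonneg (by positivity) (hrr0 m)
      nlinarith [h6, h7]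
  -- e → 0
  have hμe2 : Filter.Tendsto (fun m => μ^2*(e (m+1))^2) Filter.atTop (nhds 0) := by
    apply squeeze_zero (fun m => by positivity) hsq
    have hlim : Filter.Tendsto (fun m => (rr m)^2/4 + T^2*(rr m)) Filter.atTop
        (nhds ((0:ℝ)^2/4 + T^2*0)) := by
      exact (((hrt'.pow 2).div_const 4).add (hrt'.const_mul (T^2)))
    simpa using hlim
  have he2 : Filter.Tendsto (fun m => (e (m+1))^2) Filter.atTop (nhds 0) := by
    have hμ2 : (μ^2) ≠ 0 := by positivity
    have h := hμe2.const_mul (μ^2)⁻¹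
    simp only [← mul_assoc, inv_mul_cancel₀ hμ2, one_mul, mul_zero] at h
    exact h
  have heshift : Filter.Tendsto (fun m => e (m+1)) Filter.atTop (nhds 0) := by
    have h2 : Filter.Tendsto (fun m => Real.sqrt ((e (m+1))^2)) Filter.atTop (nhds (Real.sqrt 0)) :=
      (Real.continuous_sqrt.tendsto 0).comp he2
    rw [Real.sqrt_zero] at h2
    refine h2.congr fun m => Real.sqrt_sq (he0 (m+1))
  have het : Filter.Tendsto e Filter.atTop (nhds 0) :=
    (Filter.tendsto_add_atTop_iff_nat 1).mp heshift
  -- compactness, cluster point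
  have hcompact : IsCompact (Metric.closedBall xs T) := isCompact_closedBall xs T
  have hxmem : ∀ k, S.x k ∈ Metric.closedBall xs T := fun k => by
    rw [Metric.mem_closedBall, dist_eq_norm]; exact hball k
  obtain ⟨z, hzmem, φ, hφmono, hφt⟩ := hcompact.tendsto_subseq hxmem
  -- any subsequential limit is a minimizer
  have hminlim : ∀ (w : EuclideanSpace ℝ (Fin n)) (ψ : ℕ → ℕ),
      Filter.Tendsto ψ Filter.atTop Filter.atTop →
      Filter.Tendsto (fun j => S.x (ψ j)) Filter.atTop (nhds w) →
      ∀ y, S.F w ≤ S.F y := by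
    intro w ψ hψ hψt y
    have h1 : Filter.Tendsto (fun j => S.F (S.x (ψ j))) Filter.atTop (nhds (S.F w)) :=
      (hFc.tendsto w).comp hψt
    have h2 : Filter.Tendsto (fun j => S.F (S.x (ψ j))) Filter.atTop (nhds (S.F xs)) := by
      have h3 : Filter.Tendsto (fun j => e (ψ j)) Filter.atTop (nhds 0) := het.comp hψ
      have h4 : (fun j => S.F (S.x (ψ j))) = fun j => e (ψ j) + S.F xs := by
        funext j; rw [he]; simp
      rw [h4]
      simpa using h3.add (tendsto_const_nhds (x := S.F xs))
    have hFw : S.F w = S.F xs := tendsto_nhds_unique h1 h2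
    rw [hFw]; exact hxs y
  have hzmin : ∀ y, S.F z ≤ S.F y := hminlim z φ hφmono.tendsto_atTop hφt
  -- quasi-Fejér difference convergence
  have hdiff : ∀ w : EuclideanSpace ℝ (Fin n), (∀ y, S.F w ≤ S.F y) →
      ∃ c, Filter.Tendsto (fun k => ‖S.x k - w‖^2 - ‖S.x k - xs‖^2) Filter.atTop (nhds c) := by
    intro w hw
    obtain ⟨cw, hcw⟩ := Uconv w hw
    have hFw : S.F w = S.F xs := le_antisymm (hw xs) (hxs w)
    refine ⟨cw - c0, ?_⟩
    have h1 := hcw.sub hc0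
    have h2 : (fun k => S.U w (k+1) - S.U xs (k+1))
        = fun k => ‖S.x (k+1) - w‖^2 - ‖S.x (k+1) - xs‖^2 := funext (S.U_diff xs w hFw)
    rw [h2] at h1
    exact (Filter.tendsto_add_atTop_iff_nat 1).mp h1
  -- main convergence via unique subsequential limit
  refine ⟨z, hzmin, ?_⟩
  apply Filter.tendsto_of_subseq_tendsto
  intro ns hns
  obtain ⟨w, hwmem, ms, hmsmono, hmst⟩ := hcompact.tendsto_subseq (fun j => hxmem (ns j))
  have hcomp : Filter.Tendsto (fun j => ns (ms j)) Filter.atTop Filter.atTop :=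
    hns.comp hmsmono.tendsto_atTop
  have hwmin : ∀ y, S.F w ≤ S.F y := hminlim w (fun j => ns (ms j)) hcomp hmst
  -- show w = z
  obtain ⟨cz, hcz⟩ := hdiff z hzmin
  obtain ⟨cw, hcw⟩ := hdiff w hwmin
  have ht : Filter.Tendsto (fun k => ‖S.x k - z‖^2 - ‖S.x k - w‖^2) Filter.atTop
      (nhds (cz - cw)) := by
    have h1 := hcz.sub hcw
    have h2 : (fun k => ‖S.x k - z‖^2 - ‖S.x k - xs‖^2 - (‖S.x k - w‖^2 - ‖S.x k - xs‖^2))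
        = fun k => ‖S.x k - z‖^2 - ‖S.x k - w‖^2 := by funext k; ring
    rwa [h2] at h1
  have hcont : Continuous (fun y : EuclideanSpace ℝ (Fin n) => ‖y - z‖^2 - ‖y - w‖^2) := by
    fun_prop
  have hlim1 : cz - cw = -‖z - w‖^2 := by
    have h1 : Filter.Tendsto (fun j => ‖S.x (φ j) - z‖^2 - ‖S.x (φ j) - w‖^2) Filter.atTop
        (nhds (‖z - z‖^2 - ‖z - w‖^2)) := (hcont.tendsto z).comp hφt
    have h2 := ht.comp hφmono.tendsto_atTop
    have h3 := tendsto_nhds_unique h2 h1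
    rw [h3]; simp
  have hlim2 : cz - cw = ‖w - z‖^2 := by
    have h1 : Filter.Tendsto (fun j => ‖S.x (ns (ms j)) - z‖^2 - ‖S.x (ns (ms j)) - w‖^2)
        Filter.atTop (nhds (‖w - z‖^2 - ‖w - w‖^2)) := (hcont.tendsto w).comp hmst
    have h2 := ht.comp hcomp
    have h3 := tendsto_nhds_unique h2 h1
    rw [h3]; simp
  have hzw : w = z := by
    have h4 : ‖w - z‖^2 = -‖z - w‖^2 := by rw [← hlim2, hlim1]
    have h5 : ‖z - w‖ = ‖w - z‖ := norm_sub_rev z w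
    have h6 : ‖w - z‖^2 = 0 := by rw [h5] at h4; linarith [sq_nonneg ‖w - z‖]
    have h7 : w - z = 0 := by
      rw [← norm_eq_zero]
      nlinarith [norm_nonneg (w - z), h6]
    exact sub_eq_zero.mp h7
  exact ⟨ms, hzw ▸ hmst⟩
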